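/- Suppose p and q are monic real polynomials of degree n and n+1 respectively, each with real simple zeros, such that the zeros of q strictly interlace those of p (between consecutive zeros of q lies exactly one zero of p). Then the monic polynomial r of degree n-1 defined by r(x) = -(1/ℓ)(q(x) - x·p(x)), where ℓ is chosen to make r monic, satisfies ℓ > 0. -/

import Mathlib

open Polynomial BigOperators

private lemma prod_neg_sign' {α : Type*} {s : Finset α} {f : α → ℝ} :
    (∀ a ∈ s, f a < 0) →
    ∏ a ∈ s, f a = (-1 : ℝ) ^ s.card * ∏ a ∈ s, (-f a) := by
  intro _
  rw [← Finset.prod_const, ← Finset.prod_mul_distrib]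
  exact Finset.prod_congr rfl fun a _ => by ring

private lemma prod_pos_of_even_card {α : Type*} {s : Finset α} {f : α → ℝ}
    (h : ∀ a ∈ s, f a < 0) (he : Even s.card) : 0 < ∏ a ∈ s, f a := by
  rw [prod_neg_sign' h, he.neg_one_pow, one_mul]
  exact Finset.prod_pos fun a ha => by linarith [h a ha]

private lemma prod_neg_of_odd_card {α : Type*} {s : Finset α} {f : α → ℝ}
    (h : ∀ a ∈ s, f a < 0) (ho : Odd s.card) : ∏ a ∈ s, f a < 0 := by
  have : 0 < ∏ a ∈ s, (-f a) := Finset.prod_pos fun a ha => by linarith [h a ha]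
  rw [prod_neg_sign' h, ho.neg_one_pow, neg_one_mul]
  linarith

/-- Wendroff's step downwards: if the zeros of the monic polynomial `q` of degree `n+1`
strictly interlace those of the monic polynomial `p` of degree `n`, and the polynomial
`q - X·p` has degree at most `n-1` (so that `r = -(1/ℓ)(q - X·p)` can be monic of degree
`n-1`), then the normalizing constant `ℓ = β₂(p) - β₂(q) = (X·p - q).coeff (n-1)`
is positive. -/
theorem wendroff_ell_pos (n : ℕ) (hn : 1 ≤ n)
    (x : Fin n → ℝ) (y : Fin (n + 1) → ℝ)
    (hx : StrictMono x) (hy : StrictMono y)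
    (hint : ∀ i : Fin n, y i.castSucc < x i ∧ x i < y i.succ)
    (p q : Polynomial ℝ)
    (hp : p = ∏ i, (X - C (x i))) (hq : q = ∏ i, (X - C (y i)))
    (hdeg : (q - X * p).coeff n = 0)
    (ℓ : ℝ) (hℓ : ℓ = (X * p - q).coeff (n - 1)) :
    0 < ℓ := by
  classical
  have hxinj : Set.InjOn x (Finset.univ : Finset (Fin n)) :=
    fun a _ b _ hab => hx.injective hab
  have hpm : p.Monic := hp ▸ monic_prod_of_monic _ _ fun i _ => monic_X_sub_C _
  have hqm : q.Monic := hq ▸ monic_prod_of_monic _ _ fun i _ => monic_X_sub_C _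
  have hpd : p.natDegree = n := by
    rw [hp, natDegree_prod_of_monic _ _ fun i _ => monic_X_sub_C _]
    simp
  have hqd : q.natDegree = n + 1 := by
    rw [hq, natDegree_prod_of_monic _ _ fun i _ => monic_X_sub_C _]
    simp
  have hxpm : (X * p).Monic := monic_X.mul hpm
  have hxpd : (X * p).natDegree = n + 1 := by
    rw [natDegree_mul X_ne_zero hpm.ne_zero, natDegree_X, hpd]; omega
  -- degree of q - X*p is < n + 1
  have hd1 : (q - X * p).degree < ((n + 1 : ℕ) : WithBot ℕ) := by
    have h1 : q.degree = (X * p).degree := by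
      rw [degree_eq_natDegree hqm.ne_zero, degree_eq_natDegree hxpm.ne_zero, hqd, hxpd]
    have h2 := degree_sub_lt h1 hqm.ne_zero (by rw [hqm.leadingCoeff, hxpm.leadingCoeff])
    rwa [degree_eq_natDegree hqm.ne_zero, hqd] at h2
  -- hence degree of X*p - q is < n, using hdeg
  have hflt : (X * p - q).degree < ((n : ℕ) : WithBot ℕ) := by
    rw [degree_lt_iff_coeff_zero]
    intro m hm
    have hcm : (X * p - q).coeff m = -((q - X * p).coeff m) := by
      rw [coeff_sub, coeff_sub]; ring
    rcases eq_or_lt_of_le hm with h | h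
    · rw [hcm, ← h, hdeg, neg_zero]
    · rw [hcm, coeff_eq_zero_of_degree_lt (lt_of_lt_of_le hd1 (by exact_mod_cast h)),
        neg_zero]
  have hcard : (Finset.univ : Finset (Fin n)).card = n := by simp
  -- Lagrange interpolation of X*p - q at the zeros of p
  have hinterp : X * p - q =
      Lagrange.interpolate Finset.univ x (fun i => (X * p - q).eval (x i)) :=
    Lagrange.eq_interpolate hxinj (by rwa [hcard])
  -- the evaluation at each node
  have hpe : ∀ i : Fin n, p.eval (x i) = 0 := by
    intro i
    rw [hp, eval_prod]
    exact Finset.prod_eq_zero (Finset.mem_univ i) (by simp)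
  have heval : ∀ i : Fin n, (X * p - q).eval (x i) = -(q.eval (x i)) := by
    intro i
    simp [hpe i]
  -- the coefficient of the basis polynomials
  have hbasis : ∀ i : Fin n, (Lagrange.basis Finset.univ x i).coeff (n - 1)
      = ∏ j ∈ Finset.univ.erase i, (x i - x j)⁻¹ := by
    intro i
    have hnd : (Lagrange.basis Finset.univ x i).natDegree = n - 1 := by
      rw [Lagrange.natDegree_basis hxinj (Finset.mem_univ i), hcard]
    rw [show n - 1 = (Lagrange.basis Finset.univ x i).natDegree from hnd.symm,
      ← leadingCoeff, Lagrange.basis, leadingCoeff_prod]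
    refine Finset.prod_congr rfl fun j hj => ?_
    have hij : x i - x j ≠ 0 := by
      have : j ≠ i := (Finset.mem_erase.mp hj).1
      exact sub_ne_zero_of_ne fun h => this (hx.injective h.symm)
    rw [Lagrange.basisDivisor, leadingCoeff_mul, leadingCoeff_C,
      (monic_X_sub_C _).leadingCoeff, mul_one]
  -- the formula for ℓ
  have hℓ2 : ℓ = ∑ i : Fin n,
      (-(q.eval (x i))) * ∏ j ∈ Finset.univ.erase i, (x i - x j)⁻¹ := by
    rw [hℓ]
    conv_lhs => rw [hinterp]
    rw [Lagrange.interpolate_apply, finset_sum_coeff]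
    refine Finset.sum_congr rfl fun i _ => ?_
    rw [coeff_C_mul, heval i, hbasis i]
  rw [hℓ2]
  -- each summand is positive
  have key : ∀ i : Fin n,
      0 < (-(q.eval (x i))) * ∏ j ∈ Finset.univ.erase i, (x i - x j)⁻¹ := by
    intro i
    set A : ℝ := q.eval (x i) with hA
    set D : ℝ := ∏ j ∈ Finset.univ.erase i, (x i - x j) with hD
    -- A as a product
    have hAe : A = ∏ j : Fin (n + 1), (x i - y j) := by rw [hA, hq, eval_prod]; simp
    -- sign facts
    have hypos : ∀ j : Fin (n + 1), (j : ℕ) ≤ (i : ℕ) → 0 < x i - y j := by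
      intro j hj
      have h1 : y j ≤ y i.castSucc := hy.monotone (by
        simp [Fin.le_def, Fin.coe_castSucc]; omega)
      have h2 := (hint i).1
      linarith
    have hyneg : ∀ j : Fin (n + 1), (i : ℕ) < (j : ℕ) → x i - y j < 0 := by
      intro j hj
      have h1 : y i.succ ≤ y j := hy.monotone (by
        simp [Fin.le_def, Fin.val_succ]; omega)
      have h2 := (hint i).2
      linarith
    have hxpos : ∀ j : Fin n, j < i → 0 < x i - x j := fun j hj => sub_pos.mpr (hx hj)
    have hxneg : ∀ j : Fin n, i < j → x i - x j < 0 := fun j hj => sub_neg.mpr (hx hj)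
    -- split A
    have hAsplit : A = (∏ j ∈ Finset.univ.filter (fun j : Fin (n + 1) => (i : ℕ) < (j : ℕ)),
        (x i - y j)) * (∏ j ∈ Finset.univ.filter (fun j : Fin (n + 1) => ¬ (i : ℕ) < (j : ℕ)),
        (x i - y j)) := by
      rw [hAe, Finset.prod_filter_mul_prod_filter_not]
    have hApos2 : 0 < ∏ j ∈ Finset.univ.filter (fun j : Fin (n + 1) => ¬ (i : ℕ) < (j : ℕ)),
        (x i - y j) := by
      refine Finset.prod_pos fun j hj => ?_
      have := (Finset.mem_filter.mp hj).2
      exact hypos j (by omega)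
    -- split D
    have hDsplit : D = (∏ j ∈ (Finset.univ.erase i).filter (fun j : Fin n => i < j),
        (x i - x j)) * (∏ j ∈ (Finset.univ.erase i).filter (fun j : Fin n => ¬ i < j),
        (x i - x j)) := by
      rw [hD, Finset.prod_filter_mul_prod_filter_not]
    have hDpos2 : 0 < ∏ j ∈ (Finset.univ.erase i).filter (fun j : Fin n => ¬ i < j),
        (x i - x j) := by
      refine Finset.prod_pos fun j hj => ?_
      rcases Finset.mem_filter.mp hj with ⟨hj1, hj2⟩
      have hne : j ≠ i := (Finset.mem_erase.mp hj1).1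
      exact hxpos j (lt_of_le_of_ne (not_lt.mp hj2) hne)
    -- cardinalities of the negative parts
    have hcardA : (Finset.univ.filter (fun j : Fin (n + 1) => (i : ℕ) < (j : ℕ))).card
        = n - (i : ℕ) := by
      have : Finset.univ.filter (fun j : Fin (n + 1) => (i : ℕ) < (j : ℕ))
          = Finset.Ioi i.castSucc := by
        ext j
        simp [Finset.mem_Ioi, Fin.lt_def]
      rw [this, Fin.card_Ioi]
      simp
    have hcardD : ((Finset.univ.erase i).filter (fun j : Fin n => i < j)).card
        = n - 1 - (i : ℕ) := by
      have : (Finset.univ.erase i).filter (fun j : Fin n => i < j) = Finset.Ioi i := by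
        ext j
        simp only [Finset.mem_filter, Finset.mem_erase, Finset.mem_univ, true_and,
          Finset.mem_Ioi, and_iff_right_iff_imp]
        exact fun h => ⟨ne_of_gt h, trivial⟩
      rw [this, Fin.card_Ioi]
    have hAnegf : ∀ j ∈ Finset.univ.filter (fun j : Fin (n + 1) => (i : ℕ) < (j : ℕ)),
        x i - y j < 0 := fun j hj => hyneg j (Finset.mem_filter.mp hj).2
    have hDnegf : ∀ j ∈ (Finset.univ.erase i).filter (fun j : Fin n => i < j),
        x i - x j < 0 := fun j hj => hxneg j (Finset.mem_filter.mp hj).2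
    have hin : (i : ℕ) < n := i.isLt
    -- A * D < 0
    have hAD : A * D < 0 := by
      rcases Nat.even_or_odd (n - (i : ℕ)) with he | ho
      · have h1 : 0 < A := by
          rw [hAsplit]
          exact mul_pos (prod_pos_of_even_card hAnegf (hcardA ▸ he)) hApos2
        have h2 : D < 0 := by
          rw [hDsplit]
          refine mul_neg_of_neg_of_pos (prod_neg_of_odd_card hDnegf ?_) hDpos2
          rw [hcardD]
          rcases he with ⟨k, hk⟩
          refine ⟨k - 1, by omega⟩
        exact mul_neg_of_pos_of_neg h1 h2
      · have h1 : A < 0 := by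
          rw [hAsplit]
          exact mul_neg_of_neg_of_pos (prod_neg_of_odd_card hAnegf (hcardA ▸ ho)) hApos2
        have h2 : 0 < D := by
          rw [hDsplit]
          refine mul_pos (prod_pos_of_even_card hDnegf ?_) hDpos2
          rw [hcardD]
          rcases ho with ⟨k, hk⟩
          exact ⟨k, by omega⟩
        exact mul_neg_of_neg_of_pos h1 h2
    have hD0 : D ≠ 0 := by
      intro h
      rw [h, mul_zero] at hAD
      exact lt_irrefl _ hAD
    have hinv : ∏ j ∈ Finset.univ.erase i, (x i - x j)⁻¹ = D⁻¹ := by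
      rw [hD, ← Finset.prod_inv_distrib]
    rw [hinv]
    have heq : -A * D⁻¹ = (-(A * D)) * ((D ^ 2)⁻¹) := by
      field_simp
    rw [heq]
    have h1 : 0 < -(A * D) := by linarith
    have h2 : 0 < (D ^ 2)⁻¹ := by positivity
    exact mul_pos h1 h2
  exact Finset.sum_pos (fun i _ => key i) (by
    have : Nonempty (Fin n) := ⟨⟨0, hn⟩⟩
    exact Finset.univ_nonempty)
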